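/- Suppose f: [0,1] → ℝ is nonnegative and satisfies f(√(x²+y²))² ≥ f(x)² + f(y)² for all x, y ≥ 0 with x²+y² ≤ 1. Then for every μ ≥ 1, setting γ = 2μ, and for x ≥ y ≥ 0 with x²+y² ≤ 1 and f(x) > 0: f(√(x²+y²))^γ ≥ f(x)^γ + (μ²/(μ+1))·f(x)^(γ−2)·f(y)² + (2^μ − μ²/(μ+1) − 1)·f(y)^γ. -/

import Mathlib

open Real

lemma aux_bern (q s : ℝ) (hq : 0 ≤ q) (hs0 : 0 ≤ s) (hs1 : s ≤ 1) :
    1 + q * (q + 1) / (q + 2) * s ≤ (1 + s) ^ q := by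
  rcases le_or_gt 1 q with hq1 | hq1
  · have hb := one_add_mul_self_le_rpow_one_add (by linarith : (-1:ℝ) ≤ s) hq1
    have h2 : q * (q + 1) / (q + 2) * s ≤ q * s := by
      apply mul_le_mul_of_nonneg_right _ hs0
      rw [div_le_iff₀ (by linarith)]
      nlinarith
    linarith
  · have hc := Real.concaveOn_rpow hq hq1.le
    have hchord := hc.2 (Set.mem_Ici.2 (by norm_num : (0:ℝ) ≤ 1))
      (Set.mem_Ici.2 (by norm_num : (0:ℝ) ≤ 2)) (by linarith : 0 ≤ 1 - s) hs0 (by ring)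
    have hx : (1 - s) • (1:ℝ) + s • (2:ℝ) = 1 + s := by simp; ring
    rw [hx] at hchord
    simp only [smul_eq_mul, Real.one_rpow] at hchord
    -- 2^q ≥ 1 + q * log 2
    have h2q : (1:ℝ) + q * Real.log 2 ≤ (2:ℝ) ^ q := by
      rw [Real.rpow_def_of_pos two_pos]
      have := Real.add_one_le_exp (Real.log 2 * q)
      linarith
    have hlog : q * (q + 1) / (q + 2) ≤ q * Real.log 2 := by
      rw [div_le_iff₀ (by linarith)]
      have hl : (q + 1) ≤ Real.log 2 * (q + 2) := by
        nlinarith [mul_le_mul_of_nonneg_right (le_of_lt Real.log_two_gt_d9)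
          (by linarith : (0:ℝ) ≤ q + 2)]
      nlinarith [mul_le_mul_of_nonneg_left hl hq]
    have : s * (q * (q + 1) / (q + 2)) ≤ s * ((2:ℝ)^q - 1) :=
      mul_le_mul_of_nonneg_left (by linarith) hs0
    nlinarith

lemma aux_binom (μ t : ℝ) (hμ : 1 ≤ μ) (ht0 : 0 ≤ t) (ht1 : t ≤ 1) :
    1 + μ ^ 2 / (μ + 1) * t + (2 ^ μ - μ ^ 2 / (μ + 1) - 1) * t ^ μ ≤ (1 + t) ^ μ := by
  set c : ℝ := μ ^ 2 / (μ + 1) with hc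
  rcases eq_or_lt_of_le ht0 with rfl | htpos
  · simp [Real.zero_rpow (by linarith : μ ≠ 0)]
  set φ : ℝ → ℝ := fun s => ((1 + s) ^ μ - 1 - c * s) / s ^ μ with hφ
  have hder : ∀ s : ℝ, 0 < s → HasDerivAt φ
      (((μ * (1 + s) ^ (μ - 1) - c) * s ^ μ -
        ((1 + s) ^ μ - 1 - c * s) * (μ * s ^ (μ - 1))) / (s ^ μ) ^ 2) s := by
    intro s hs
    have h1 : HasDerivAt (fun u : ℝ => (1 + u) ^ μ) (μ * (1 + s) ^ (μ - 1)) s := by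
      have h0 : HasDerivAt (fun u : ℝ => 1 + u) 1 s := (hasDerivAt_id s).const_add 1
      have h2 := h0.rpow_const (p := μ) (Or.inr hμ)
      simpa using h2
    have hN : HasDerivAt (fun u : ℝ => (1 + u) ^ μ - 1 - c * u)
        (μ * (1 + s) ^ (μ - 1) - c) s := by
      have h3 : HasDerivAt (fun u : ℝ => c * u) c s := by
        simpa using (hasDerivAt_id s).const_mul c
      exact (h1.sub_const 1).sub h3
    have hD : HasDerivAt (fun u : ℝ => u ^ μ) (μ * s ^ (μ - 1)) s :=
      Real.hasDerivAt_rpow_const (Or.inl hs.ne')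
    exact hN.div hD (by positivity)
  have hφ1 : φ 1 = 2 ^ μ - 1 - c := by
    simp only [hφ]
    norm_num
  have hmain : φ 1 ≤ φ t := by
    rcases eq_or_lt_of_le ht1 with rfl | htlt
    · exact le_rfl
    · have hanti : AntitoneOn φ (Set.Icc t 1) := by
        apply antitoneOn_of_deriv_nonpos (convex_Icc t 1)
        · intro s hs
          exact ((hder s (lt_of_lt_of_le htpos hs.1)).differentiableAt).continuousAt.continuousWithinAt
        · intro s hs
          rw [interior_Icc] at hs
          exact ((hder s (htpos.trans hs.1)).differentiableAt).differentiableWithinAt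
        · intro s hs
          rw [interior_Icc] at hs
          obtain ⟨hs1, hs2⟩ := hs
          have hspos : 0 < s := htpos.trans hs1
          rw [(hder s hspos).deriv]
          apply div_nonpos_of_nonpos_of_nonneg _ (by positivity)
          -- numerator ≤ 0
          have hsμ : s ^ μ = s ^ (μ - 1) * s := by
            rw [← Real.rpow_add_one hspos.ne' (μ - 1)]
            norm_num
          have h1sμ : (1 + s) ^ μ = (1 + s) ^ (μ - 1) * (1 + s) := by
            rw [← Real.rpow_add_one (by positivity : (1:ℝ) + s ≠ 0) (μ - 1)]
            norm_num
          rw [hsμ, h1sμ]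
          have hkey : μ + c * (μ - 1) * s ≤ μ * (1 + s) ^ (μ - 1) := by
            have hb := aux_bern (μ - 1) s (by linarith) (le_of_lt hspos) (le_of_lt hs2)
            have : μ - 1 + 1 = μ := by ring
            rw [this] at hb
            have h2 : μ - 1 + 2 = μ + 1 := by ring
            rw [h2] at hb
            have hmm := mul_le_mul_of_nonneg_left hb (by linarith : (0:ℝ) ≤ μ)
            have hμ1 : (0:ℝ) < μ + 1 := by linarith
            have heq : μ + c * (μ - 1) * s = μ * (1 + (μ - 1) * μ / (μ + 1) * s) := by
              rw [hc]; field_simp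
            rw [heq]
            exact hmm
          have hfact : (μ * (1 + s) ^ (μ - 1) - c) * (s ^ (μ - 1) * s) -
              ((1 + s) ^ (μ - 1) * (1 + s) - 1 - c * s) * (μ * s ^ (μ - 1)) =
              s ^ (μ - 1) * (μ + c * (μ - 1) * s - μ * (1 + s) ^ (μ - 1)) := by
            ring
          rw [hfact]
          apply mul_nonpos_of_nonneg_of_nonpos (by positivity)
          linarith
      exact hanti (Set.mem_Icc.2 ⟨le_refl t, ht1⟩) (Set.mem_Icc.2 ⟨ht1, le_refl 1⟩) ht1
  rw [hφ1] at hmain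
  have htμ : (0:ℝ) < t ^ μ := Real.rpow_pos_of_pos htpos μ
  simp only [hφ] at hmain
  rw [le_div_iff₀ htμ] at hmain
  linarith [hmain]

theorem stmt_14 (f : ℝ → ℝ)
    (hf0 : ∀ t ∈ Set.Icc (0 : ℝ) 1, 0 ≤ f t)
    (hsuper : ∀ x y : ℝ, 0 ≤ x → 0 ≤ y → x ^ 2 + y ^ 2 ≤ 1 →
      f (Real.sqrt (x ^ 2 + y ^ 2)) ^ 2 ≥ f x ^ 2 + f y ^ 2)
    (μ γ : ℝ) (hμ : 1 ≤ μ) (hγ : γ = 2 * μ)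
    (x y : ℝ) (hy0 : 0 ≤ y) (hyx : y ≤ x) (hxy : x ^ 2 + y ^ 2 ≤ 1)
    (hfx : 0 < f x) :
    f (Real.sqrt (x ^ 2 + y ^ 2)) ^ γ ≥
      f x ^ γ + (μ ^ 2 / (μ + 1)) * f x ^ (γ - 2) * f y ^ 2
        + (2 ^ μ - μ ^ 2 / (μ + 1) - 1) * f y ^ γ := by
  have hx0 : 0 ≤ x := le_trans hy0 hyx
  have hx1 : x ≤ 1 := by nlinarith
  have hy1 : y ≤ 1 := by nlinarith
  set a := f x with ha
  set b := f y with hb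
  set r := Real.sqrt (x ^ 2 + y ^ 2) with hr
  have hb0 : 0 ≤ b := hf0 y ⟨hy0, hy1⟩
  have hr0 : 0 ≤ r := Real.sqrt_nonneg _
  have hr1 : r ≤ 1 := by
    rw [hr, show (1:ℝ) = Real.sqrt 1 by simp]
    exact Real.sqrt_le_sqrt hxy
  have hc0 : 0 ≤ f r := hf0 r ⟨hr0, hr1⟩
  -- f y ≤ f x
  have hba : b ≤ a := by
    set z := Real.sqrt (x ^ 2 - y ^ 2) with hz
    have hz2 : z ^ 2 = x ^ 2 - y ^ 2 := Real.sq_sqrt (by nlinarith)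
    have hz0 : 0 ≤ z := Real.sqrt_nonneg _
    have hz1 : z ≤ 1 := by nlinarith
    have hfz : 0 ≤ f z := hf0 z ⟨hz0, hz1⟩
    have hsum : z ^ 2 + y ^ 2 = x ^ 2 := by rw [hz2]; ring
    have h := hsuper z y hz0 hy0 (by rw [hsum]; nlinarith)
    rw [hsum, Real.sqrt_sq hx0] at h
    nlinarith
  have hsq := hsuper x y hx0 hy0 hxy
  have ha0 : (0:ℝ) < a := hfx
  set t := b ^ 2 / a ^ 2 with hT
  have ht0 : 0 ≤ t := by positivity
  have ht1 : t ≤ 1 := by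
    rw [hT, div_le_one (by positivity)]
    nlinarith
  have key := aux_binom μ t hμ ht0 ht1
  have hμ0 : (0:ℝ) ≤ μ := by linarith
  -- (f r)^γ = ((f r)^2)^μ
  have hrγ : f r ^ γ = ((f r ^ 2 : ℝ)) ^ μ := by
    rw [hγ, ← Real.rpow_natCast (f r) 2, ← Real.rpow_mul hc0]
    norm_num
  have haγ : a ^ γ = ((a ^ 2 : ℝ)) ^ μ := by
    rw [hγ, ← Real.rpow_natCast a 2, ← Real.rpow_mul ha0.le]
    norm_num
  have hbγ : b ^ γ = ((b ^ 2 : ℝ)) ^ μ := by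
    rw [hγ, ← Real.rpow_natCast b 2, ← Real.rpow_mul hb0]
    norm_num
  have hstep1 : (a ^ 2 + b ^ 2 : ℝ) ^ μ ≤ (f r ^ 2 : ℝ) ^ μ :=
    Real.rpow_le_rpow (by positivity) hsq hμ0
  have hsplit : (a ^ 2 + b ^ 2 : ℝ) ^ μ = (a ^ 2 : ℝ) ^ μ * (1 + t) ^ μ := by
    rw [← Real.mul_rpow (by positivity) (by positivity)]
    congr 1
    rw [hT]
    field_simp
  have hmul := mul_le_mul_of_nonneg_left key
    (by positivity : (0:ℝ) ≤ (a ^ 2 : ℝ) ^ μ)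
  -- identities
  have hid1 : (a ^ 2 : ℝ) ^ μ * (μ ^ 2 / (μ + 1) * t) =
      μ ^ 2 / (μ + 1) * a ^ (γ - 2) * b ^ 2 := by
    have h1 : a ^ (γ - 2) = a ^ γ / a ^ 2 := by
      rw [Real.rpow_sub ha0, ← Real.rpow_natCast a 2]
      norm_num
    rw [h1, ← haγ, hT]
    field_simp
  have hid2 : (a ^ 2 : ℝ) ^ μ * ((2 ^ μ - μ ^ 2 / (μ + 1) - 1) * t ^ μ) =
      (2 ^ μ - μ ^ 2 / (μ + 1) - 1) * b ^ γ := by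
    rw [hbγ, hT]
    rw [mul_comm ((a^2:ℝ)^μ), mul_assoc, ← Real.mul_rpow (by positivity) (by positivity)]
    congr 2
    field_simp
  calc f r ^ γ = (f r ^ 2 : ℝ) ^ μ := hrγ
    _ ≥ (a ^ 2 + b ^ 2 : ℝ) ^ μ := hstep1
    _ = (a ^ 2 : ℝ) ^ μ * (1 + t) ^ μ := hsplit
    _ ≥ (a ^ 2 : ℝ) ^ μ * (1 + μ ^ 2 / (μ + 1) * t + (2 ^ μ - μ ^ 2 / (μ + 1) - 1) * t ^ μ) := hmul
    _ = a ^ γ + μ ^ 2 / (μ + 1) * a ^ (γ - 2) * b ^ 2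
        + (2 ^ μ - μ ^ 2 / (μ + 1) - 1) * b ^ γ := by
      rw [mul_add, mul_add, mul_one, hid1, hid2, haγ]
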